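/- Let w : ℝ → ℝ be twice differentiable and define u(t,x,y) = x·w(y²/x) for x ≠ 0, with z = y²/x. Then u satisfies the Zabolotskaya–Khokhlov equation u_{xt} − (u u_x)_x − u_{yy} = 0 at a point with x ≠ 0 if and only if w satisfies the reduced ODE −w(z)² + 2(w(z)z − 1)w'(z) − z²w'(z)² − (4z + w(z)z²)w''(z) = 0 at z = y²/x. -/

import Mathlib

/-- The Zabolotskaya–Khokhlov equation `u_{xt} − (u u_x)_x − u_{yy} = 0`
at the point `(t,x,y)`. -/
noncomputable def ZK (u : ℝ → ℝ → ℝ → ℝ) (t x y : ℝ) : Prop :=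
  deriv (fun x' => deriv (fun t' => u t' x' y) t) x
    - deriv (fun x' => u t x' y * deriv (fun x'' => u t x'' y) x') x
    - deriv (fun y' => deriv (fun y'' => u t x y'') y') y = 0

theorem reduction_L21 (w : ℝ → ℝ) (hw : ContDiff ℝ 2 w)
    (t x y : ℝ) (hx : x ≠ 0) :
    ZK (fun _ x y => x * w (y ^ 2 / x)) t x y ↔
      (fun z =>
        -(w z) ^ 2 + 2 * (w z * z - 1) * deriv w z - z ^ 2 * (deriv w z) ^ 2
          - (4 * z + w z * z ^ 2) * deriv (deriv w) z = 0) (y ^ 2 / x) := by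
  have hw1 : Differentiable ℝ w := hw.differentiable two_ne_zero
  have hw2 : Differentiable ℝ (deriv w) := by
    have h : ContDiff ℝ (1 : ℕ) (deriv^[1] w) :=
      ContDiff.iterate_deriv' 1 1 (by exact_mod_cast hw)
    simpa using h.differentiable (by norm_num)
  set z : ℝ := y ^ 2 / x with hz
  -- derivative of z as a function of x'
  have hzx : ∀ x' : ℝ, x' ≠ 0 →
      HasDerivAt (fun s : ℝ => y ^ 2 / s) (-(y ^ 2) / x' ^ 2) x' := by
    intro x' hx'
    have h := (hasDerivAt_inv hx').const_mul (y ^ 2)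
    have : (fun s : ℝ => y ^ 2 * s⁻¹) = fun s : ℝ => y ^ 2 / s := by
      funext s; rw [div_eq_mul_inv]
    rw [this] at h
    exact h.congr_deriv (by ring)
  -- inner x-derivative of u
  have hgx : ∀ x' : ℝ, x' ≠ 0 →
      HasDerivAt (fun s : ℝ => s * w (y ^ 2 / s))
        (w (y ^ 2 / x') - (y ^ 2 / x') * deriv w (y ^ 2 / x')) x' := by
    intro x' hx'
    have hwc : HasDerivAt (fun s : ℝ => w (y ^ 2 / s))
        (deriv w (y ^ 2 / x') * (-(y ^ 2) / x' ^ 2)) x' :=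
      (hw1 (y ^ 2 / x')).hasDerivAt.comp x' (hzx x' hx')
    have h := (hasDerivAt_id x').mul hwc
    exact h.congr_deriv (by simp only [id]; field_simp; ring)
  have hderivg : ∀ x' : ℝ, x' ≠ 0 →
      deriv (fun s : ℝ => s * w (y ^ 2 / s)) x'
        = w (y ^ 2 / x') - (y ^ 2 / x') * deriv w (y ^ 2 / x') := fun x' hx' =>
    (hgx x' hx').deriv
  -- second term
  have hterm2 : deriv (fun x' => x' * w (y ^ 2 / x')
      * deriv (fun x'' => x'' * w (y ^ 2 / x'')) x') x
      = w z ^ 2 - 2 * z * w z * deriv w z + z ^ 2 * (deriv w z) ^ 2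
        + z ^ 2 * w z * deriv (deriv w) z := by
    have heq : (fun x' => x' * w (y ^ 2 / x')
        * deriv (fun x'' => x'' * w (y ^ 2 / x'')) x')
        =ᶠ[nhds x] fun x' => x' * w (y ^ 2 / x')
          * (w (y ^ 2 / x') - (y ^ 2 / x') * deriv w (y ^ 2 / x')) := by
      filter_upwards [isOpen_ne.mem_nhds (show x ≠ 0 from hx)] with x' hx'
      rw [hderivg x' hx']
    rw [heq.deriv_eq]
    -- compute derivative of F(x') = x' w(z') (w z' - z' * w' z')
    have hA : HasDerivAt (fun s : ℝ => w (y ^ 2 / s))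
        (deriv w z * (-(y ^ 2) / x ^ 2)) x :=
      (hw1 z).hasDerivAt.comp x (hzx x hx)
    have hA' : HasDerivAt (fun s : ℝ => deriv w (y ^ 2 / s))
        (deriv (deriv w) z * (-(y ^ 2) / x ^ 2)) x :=
      (hw2 (y ^ 2 / x)).hasDerivAt.comp x (hzx x hx)
    have hB : HasDerivAt (fun s : ℝ => (y ^ 2 / s) * deriv w (y ^ 2 / s))
        ((-(y ^ 2) / x ^ 2) * deriv w z + z * (deriv (deriv w) z * (-(y ^ 2) / x ^ 2))) x :=
      (hzx x hx).mul hA'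
    rw [((hgx x hx).fun_mul (hA.fun_sub hB)).deriv]
    have hz2 : z * x = y ^ 2 := by rw [hz]; field_simp
    rw [hz]; field_simp
    ring
  -- y derivatives
  have hyin : ∀ y' : ℝ, HasDerivAt (fun y'' : ℝ => x * w (y'' ^ 2 / x))
      (x * (deriv w (y' ^ 2 / x) * (2 * y' / x))) y' := by
    intro y'
    have hzy : HasDerivAt (fun y'' : ℝ => y'' ^ 2 / x) (2 * y' / x) y' := by
      have := (hasDerivAt_pow 2 y').div_const x
      simpa using this
    exact ((hw1 _).hasDerivAt.comp y' hzy).const_mul x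
  have hterm3 : deriv (fun y' => deriv (fun y'' : ℝ => x * w (y'' ^ 2 / x)) y') y
      = 2 * deriv w z + 4 * z * deriv (deriv w) z := by
    have heq : (fun y' => deriv (fun y'' : ℝ => x * w (y'' ^ 2 / x)) y')
        = fun y' => x * (deriv w (y' ^ 2 / x) * (2 * y' / x)) := by
      funext y'; exact (hyin y').deriv
    rw [heq]
    have hzy : HasDerivAt (fun y' : ℝ => y' ^ 2 / x) (2 * y / x) y := by
      have := (hasDerivAt_pow 2 y).div_const x
      simpa using this
    have hC : HasDerivAt (fun y' : ℝ => deriv w (y' ^ 2 / x))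
        (deriv (deriv w) z * (2 * y / x)) y :=
      HasDerivAt.comp (h₂ := deriv w) y (hw2 (y ^ 2 / x)).hasDerivAt hzy
    have hlin : HasDerivAt (fun y' : ℝ => 2 * y' / x) (2 / x) y := by
      have := ((hasDerivAt_id y).const_mul 2).div_const x
      simpa using this
    have hF : HasDerivAt (fun y' : ℝ => x * (deriv w (y' ^ 2 / x) * (2 * y' / x)))
        (x * ((deriv (deriv w) z * (2 * y / x)) * (2 * y / x)
          + deriv w z * (2 / x))) y := (hC.mul hlin).const_mul x
    rw [hF.deriv]
    rw [hz]; field_simp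
    ring
  have hterm1 : deriv (fun x' : ℝ => deriv (fun _ : ℝ => x' * w (y ^ 2 / x')) t) x = 0 := by
    simp
  unfold ZK
  simp only at *
  rw [hterm1, hterm2, hterm3]
  constructor <;> intro h <;> linarith
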